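/- Let G be a graph and let S be a 2-club cover of G of cost c. Then there exists a sequence of exactly c edge deletions and vertex splits turning G into a disjoint union of 2-clubs whose connected components are exactly the subgraphs induced by the sets of the cover; hence 2ccedvs(G) ≤ cost(C) for every 2-club cover C. -/

import Mathlib

open SimpleGraph

/-- `H` is obtained from `G` by splitting vertex `v` into two copies `v` and `v'`
(where `v'` was an isolated vertex), with `N(v₁) ∪ N(v₂) = N(v)`. -/
def IsSplitAt {V : Type*} (v v' : V) (G H : SimpleGraph V) : Prop :=
  v ≠ v' ∧ G.neighborSet v' = ∅ ∧ ¬ H.Adj v v' ∧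
  (∀ x y : V, x ≠ v → x ≠ v' → y ≠ v → y ≠ v' → (H.Adj x y ↔ G.Adj x y)) ∧
  (∀ x : V, x ≠ v → x ≠ v' → ((H.Adj v x ∨ H.Adj v' x) ↔ G.Adj v x))

/-- `H` is obtained from `G` by a single vertex split. -/
def IsSplit {V : Type*} (G H : SimpleGraph V) : Prop :=
  ∃ v v', IsSplitAt v v' G H

/-- `H` is obtained from `G` by deleting a single (existing) edge. -/
def IsEdgeDeletion {V : Type*} (G H : SimpleGraph V) : Prop :=
  ∃ u v : V, G.Adj u v ∧ H = G.deleteEdges {s(u, v)}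

/-- Editing operations: edge deletion, or vertex split (recording the split vertex
and the name of the new copy). -/
inductive Op where
  | del : ℕ → ℕ → Op
  | split : ℕ → ℕ → Op

/-- Semantics of one operation. -/
def OpApplies : Op → SimpleGraph ℕ → SimpleGraph ℕ → Prop
  | Op.del u v, G, H => G.Adj u v ∧ H = G.deleteEdges {s(u, v)}
  | Op.split v v', G, H => IsSplitAt v v' G H

/-- Applying a list of operations in order. -/
def OpsApply : List Op → SimpleGraph ℕ → SimpleGraph ℕ → Prop
  | [], G, H => H = G
  | o :: l, G, H => ∃ G', OpApplies o G G' ∧ OpsApply l G' H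

def IsSplitOp : Op → Prop
  | Op.split _ _ => True
  | Op.del _ _ => False

/-- The set of vertices on which a split is performed in the list of operations. -/
def splitVerts (l : List Op) : Set ℕ := {v | ∃ v', Op.split v v' ∈ l}

/-- `G` is a disjoint union of 2-clubs: within each connected component all
distances are at most 2. -/
def Is2ClubGraph (G : SimpleGraph ℕ) : Prop :=
  ∀ u v : ℕ, G.Reachable u v → G.dist u v ≤ 2

/-- Minimum number of vertex splits turning `G` into a disjoint union of 2-clubs. -/
noncomputable def twoCcvs (G : SimpleGraph ℕ) : ℕ :=
  sInf {k | ∃ l H, l.length = k ∧ (∀ o ∈ l, IsSplitOp o) ∧ OpsApply l G H ∧ Is2ClubGraph H}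

/-- Minimum number of edge deletions and vertex splits turning `G` into a
disjoint union of 2-clubs. -/
noncomputable def twoCcedvs (G : SimpleGraph ℕ) : ℕ :=
  sInf {k | ∃ l H, l.length = k ∧ OpsApply l G H ∧ Is2ClubGraph H}

/-- The subgraph of `G` induced on `s` (kept on the same vertex type, all
vertices outside `s` becoming isolated). -/
def inducedOn (G : SimpleGraph ℕ) (s : Set ℕ) : SimpleGraph ℕ where
  Adj x y := G.Adj x y ∧ x ∈ s ∧ y ∈ s
  symm := ⟨fun x y h => ⟨h.1.symm, h.2.2, h.2.1⟩⟩
  loopless := ⟨fun x h => G.loopless.irrefl x h.1⟩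

/-- The set `s` induces a 2-club in `G` (connected, diameter at most 2). -/
def Inducing2Club (G : SimpleGraph ℕ) (s : Set ℕ) : Prop :=
  ∀ u ∈ s, ∀ v ∈ s, (inducedOn G s).Reachable u v ∧ (inducedOn G s).dist u v ≤ 2

/-- The path with vertices `0, 1, …, m` (length `m`). -/
def pathG (m : ℕ) : SimpleGraph ℕ :=
  SimpleGraph.fromRel (fun i j => j = i + 1 ∧ j ≤ m)

/-- The cycle with vertices `0, 1, …, n-1`. -/
def cycleG (n : ℕ) : SimpleGraph ℕ :=
  SimpleGraph.fromRel (fun i j => i < n ∧ j = (i + 1) % n)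

/-- Total cost of a 2-club cover: each vertex pays (multiplicity − 1), each edge
not contained in some set of the cover pays 1. -/
noncomputable def coverCost (G : SimpleGraph ℕ) (C : Finset (Finset ℕ)) : ℕ :=
  (∑ v ∈ C.sup id, ((C.filter (fun S => v ∈ S)).card - 1)) +
    Set.ncard {e : Sym2 ℕ | e ∈ G.edgeSet ∧ ¬ ∃ S ∈ C, ∀ x ∈ e, x ∈ S}

/-- `C` is a 2-club cover of `G`: it covers the vertices of `G` and each set
induces a 2-club. -/
def Is2ClubCover (G : SimpleGraph ℕ) (C : Finset (Finset ℕ)) : Prop :=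
  (∀ v ∈ G.support, ∃ S ∈ C, v ∈ S) ∧ ∀ S ∈ C, Inducing2Club G (↑S : Set ℕ)

lemma opsApply_append {l₁ l₂ : List Op} {G K H : SimpleGraph ℕ}
    (h₁ : OpsApply l₁ G K) (h₂ : OpsApply l₂ K H) : OpsApply (l₁ ++ l₂) G H := by
  induction l₁ generalizing G with
  | nil => simp only [OpsApply] at h₁; subst h₁; simpa using h₂
  | cons o l ih =>
    obtain ⟨G', ho, hl⟩ := h₁
    exact ⟨G', ho, ih hl⟩

lemma deletion_ops (F : Finset (Sym2 ℕ)) : ∀ G : SimpleGraph ℕ, ↑F ⊆ G.edgeSet →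
    ∃ l : List Op, l.length = F.card ∧ OpsApply l G (G.deleteEdges ↑F) := by
  induction F using Finset.induction_on with
  | empty =>
    intro G _
    exact ⟨[], rfl, by simp [OpsApply]⟩
  | @insert e F he ih =>
    induction e using Sym2.ind with
    | _ u w =>
    intro G hsub
    have hadj : G.Adj u w := by
      have := hsub (Finset.mem_coe.mpr (Finset.mem_insert_self _ _))
      rwa [SimpleGraph.mem_edgeSet] at this
    obtain ⟨l, hlen, hops⟩ := ih (G.deleteEdges {s(u, w)}) (by
      intro f hf
      rw [SimpleGraph.edgeSet_deleteEdges]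
      refine ⟨hsub (by simp only [Finset.coe_insert, Set.mem_insert_iff]; right; exact hf), ?_⟩
      simp only [Set.mem_singleton_iff]
      rintro rfl
      exact he (by simpa using hf))
    refine ⟨Op.del u w :: l, by simp [hlen, Finset.card_insert_of_notMem he], ?_⟩
    refine ⟨G.deleteEdges {s(u, w)}, ⟨hadj, rfl⟩, ?_⟩
    have heq : (G.deleteEdges {s(u, w)}).deleteEdges ↑F = G.deleteEdges ↑(insert s(u, w) F) := by
      rw [SimpleGraph.deleteEdges_deleteEdges, Finset.coe_insert, Set.insert_eq]
    rw [← heq]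
    exact hops

lemma inducedOn_le (G : SimpleGraph ℕ) (s : Set ℕ) : inducedOn G s ≤ G := fun _ _ h => h.1

lemma inducing2Club_iso {G G' : SimpleGraph ℕ} {s t : Set ℕ} (σ : ℕ ≃ ℕ)
    (hst : ∀ a, a ∈ s ↔ σ a ∈ t)
    (hadj : ∀ a b, (inducedOn G' t).Adj (σ a) (σ b) ↔ (inducedOn G s).Adj a b)
    (h : Inducing2Club G s) : Inducing2Club G' t := by
  let f : inducedOn G s →g inducedOn G' t := ⟨fun x => σ x, fun h => (hadj _ _).mpr h⟩
  intro u hu v hv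
  obtain ⟨a, rfl⟩ : ∃ a, σ a = u := ⟨σ.symm u, σ.apply_symm_apply u⟩
  obtain ⟨b, rfl⟩ : ∃ b, σ b = v := ⟨σ.symm v, σ.apply_symm_apply v⟩
  have ha : a ∈ s := (hst a).mpr hu
  have hb : b ∈ s := (hst b).mpr hv
  obtain ⟨hr, hd⟩ := h a ha b hb
  have hfx : ∀ x, f x = σ x := fun _ => rfl
  constructor
  · have := hr.map f
    rwa [hfx, hfx] at this
  · obtain ⟨p, hp⟩ := hr.exists_walk_length_eq_dist
    have := SimpleGraph.dist_le (p.map f)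
    rw [SimpleGraph.Walk.length_map, hp, hfx, hfx] at this
    exact this.trans hd
lemma splitPhase : ∀ (n : ℕ) (G : SimpleGraph ℕ) (C : Finset (Finset ℕ)),
    G.support.Finite →
    (∀ a b, G.Adj a b → ∃ S ∈ C, a ∈ S ∧ b ∈ S) →
    (∀ S ∈ C, Inducing2Club G (↑S : Set ℕ)) →
    (∑ v ∈ C.sup id, ((C.filter (fun S => v ∈ S)).card - 1)) = n →
    ∃ l H, l.length = n ∧ OpsApply l G H ∧ Is2ClubGraph H := by
  intro n
  induction n with
  | zero =>
    intro G C hfin hcov hclub hsum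
    refine ⟨[], G, rfl, by simp [OpsApply], ?_⟩
    -- uniqueness of the covering set for each vertex
    have huniq : ∀ w S₁ S₂, S₁ ∈ C → S₂ ∈ C → w ∈ S₁ → w ∈ S₂ → S₁ = S₂ := by
      intro w S₁ S₂ h1 h2 hw1 hw2
      have hwsup : w ∈ C.sup id := Finset.mem_sup.mpr ⟨S₁, h1, hw1⟩
      have hterm := Finset.sum_eq_zero_iff.mp hsum w hwsup
      have hcard : (C.filter (fun S => w ∈ S)).card ≤ 1 := by omega
      exact Finset.card_le_one.mp hcard S₁ (Finset.mem_filter.mpr ⟨h1, hw1⟩)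
        S₂ (Finset.mem_filter.mpr ⟨h2, hw2⟩)
    have hwalk : ∀ (u w : ℕ) (p : G.Walk u w) (S : Finset ℕ), S ∈ C → u ∈ S → w ∈ S := by
      intro u w p
      induction p with
      | nil => exact fun S _ h => h
      | cons h p ih =>
        intro S hS hu
        obtain ⟨S₂, hS₂, ha, hb⟩ := hcov _ _ h
        have := huniq _ S S₂ hS hS₂ hu ha
        subst this
        exact ih S hS hb
    intro u w hr
    rcases eq_or_ne u w with rfl | hne
    · simp [SimpleGraph.dist_self]
    obtain ⟨p⟩ := hr
    cases p with
    | nil => exact absurd rfl hne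
    | cons h q =>
      obtain ⟨S, hS, hu, _⟩ := hcov _ _ h
      have hw : w ∈ S := hwalk _ _ (SimpleGraph.Walk.cons h q) S hS hu
      obtain ⟨hr', hd'⟩ := hclub S hS u (by exact hu) w (by exact hw)
      calc G.dist u w ≤ (inducedOn G ↑S).dist u w :=
            SimpleGraph.Reachable.dist_anti (inducedOn_le G ↑S) hr'
        _ ≤ 2 := hd'
  | succ n ih =>
    intro G C hfin hcov hclub hsum
    -- find a vertex of multiplicity at least 2
    have hex : ∃ v ∈ C.sup id, 2 ≤ (C.filter (fun S => v ∈ S)).card := by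
      by_contra hcon
      push_neg at hcon
      have : (∑ v ∈ C.sup id, ((C.filter (fun S => v ∈ S)).card - 1)) = 0 :=
        Finset.sum_eq_zero (fun v hv => by have := hcon v hv; omega)
      omega
    obtain ⟨v, hvsup, hv2⟩ := hex
    obtain ⟨S, hSf, T, hTf, hST⟩ := Finset.one_lt_card.mp hv2
    have hSC : S ∈ C := (Finset.mem_filter.mp hSf).1
    have hTC : T ∈ C := (Finset.mem_filter.mp hTf).1
    have hvS : v ∈ S := (Finset.mem_filter.mp hSf).2
    have hvT : v ∈ T := (Finset.mem_filter.mp hTf).2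
    -- choose a fresh vertex v'
    have hbig : ((↑(C.sup id) : Set ℕ) ∪ G.support).Finite :=
      Set.Finite.union (C.sup id).finite_toSet hfin
    obtain ⟨v', hv'⟩ := hbig.infinite_compl.nonempty
    have hv'sup : v' ∉ C.sup id := fun h => hv' (Or.inl h)
    have hv'G : v' ∉ G.support := fun h => hv' (Or.inr h)
    have hv'C : ∀ S' ∈ C, v' ∉ S' := fun S' hS' h => hv'sup (Finset.mem_sup.mpr ⟨S', hS', h⟩)
    have hvv' : v ≠ v' := fun h => hv'sup (h ▸ hvsup)
    have hnadj : ∀ b, ¬ G.Adj v' b := fun b h => hv'G ⟨b, h⟩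
    -- the split graph
    set G' : SimpleGraph ℕ := SimpleGraph.fromRel (fun a b =>
      (a ≠ v ∧ a ≠ v' ∧ b ≠ v ∧ b ≠ v' ∧ G.Adj a b)
      ∨ (a = v ∧ G.Adj v b ∧ ∃ S' ∈ C, S' ≠ T ∧ v ∈ S' ∧ b ∈ S')
      ∨ (a = v' ∧ G.Adj v b ∧ b ∈ T)) with hG'def
    have hGv : ∀ b, G'.Adj v b ↔ (G.Adj v b ∧ ∃ S' ∈ C, S' ≠ T ∧ v ∈ S' ∧ b ∈ S') := by
      intro b
      rw [hG'def, SimpleGraph.fromRel_adj]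
      constructor
      · rintro ⟨hne, h | h⟩
        · rcases h with ⟨h1, _⟩ | ⟨_, h2, h3⟩ | ⟨h1, _⟩
          · exact absurd rfl h1
          · exact ⟨h2, h3⟩
          · exact absurd h1 hvv'
        · rcases h with ⟨_, _, h1, _⟩ | ⟨_, h2, _⟩ | ⟨_, h2, _⟩
          · exact absurd rfl h1
          · exact absurd h2 (G.loopless.irrefl v)
          · exact absurd h2 (G.loopless.irrefl v)
      · rintro ⟨h1, h2⟩
        exact ⟨h1.ne, Or.inl (Or.inr (Or.inl ⟨rfl, h1, h2⟩))⟩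
    have hGv' : ∀ b, G'.Adj v' b ↔ (G.Adj v b ∧ b ∈ T) := by
      intro b
      rw [hG'def, SimpleGraph.fromRel_adj]
      constructor
      · rintro ⟨hne, h | h⟩
        · rcases h with ⟨_, h1, _⟩ | ⟨h1, _⟩ | ⟨_, h2, h3⟩
          · exact absurd rfl h1
          · exact absurd h1.symm hvv'
          · exact ⟨h2, h3⟩
        · rcases h with ⟨_, _, _, h1, _⟩ | ⟨_, h2, _⟩ | ⟨_, h2, _⟩
          · exact absurd rfl h1
          · exact absurd h2.symm (hnadj v)
          · exact absurd h2.symm (hnadj v)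
      · rintro ⟨h1, h2⟩
        have hbv' : b ≠ v' := fun h => hnadj v (h ▸ h1).symm
        exact ⟨Ne.symm hbv', Or.inl (Or.inr (Or.inr ⟨rfl, h1, h2⟩))⟩
    have hGother : ∀ a b, a ≠ v → a ≠ v' → b ≠ v → b ≠ v' → (G'.Adj a b ↔ G.Adj a b) := by
      intro a b hav hav' hbv hbv'
      rw [hG'def, SimpleGraph.fromRel_adj]
      constructor
      · rintro ⟨hne, h | h⟩
        · rcases h with ⟨_, _, _, _, h⟩ | ⟨h1, _⟩ | ⟨h1, _⟩
          · exact h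
          · exact absurd h1 hav
          · exact absurd h1 hav'
        · rcases h with ⟨_, _, _, _, h⟩ | ⟨h1, _⟩ | ⟨h1, _⟩
          · exact h.symm
          · exact absurd h1 hbv
          · exact absurd h1 hbv'
      · intro h
        exact ⟨h.ne, Or.inl (Or.inl ⟨hav, hav', hbv, hbv', h⟩)⟩
    have hG'vv' : ¬ G'.Adj v v' := by
      rw [hGv]
      rintro ⟨h, _⟩
      exact hnadj v h.symm
    -- the split certificate
    have hsplit : IsSplitAt v v' G G' := by
      refine ⟨hvv', ?_, hG'vv', ?_, ?_⟩
      · ext x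
        simp only [SimpleGraph.mem_neighborSet, Set.mem_empty_iff_false, iff_false]
        exact hnadj x
      · intro x y hxv hxv' hyv hyv'
        exact hGother x y hxv hxv' hyv hyv'
      · intro x hxv hxv'
        constructor
        · rintro (h | h)
          · exact ((hGv x).mp h).1
          · exact ((hGv' x).mp h).1
        · intro h
          obtain ⟨S'', hS'', ha, hb⟩ := hcov _ _ h
          rcases eq_or_ne S'' T with rfl | hne
          · exact Or.inr ((hGv' x).mpr ⟨h, hb⟩)
          · exact Or.inl ((hGv x).mpr ⟨h, S'', hS'', hne, ha, hb⟩)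
    -- support of G' is finite
    have hsup' : G'.support ⊆ G.support ∪ {v'} := by
      intro a ⟨b, hab⟩
      rcases eq_or_ne a v' with rfl | hav'
      · exact Or.inr rfl
      rcases eq_or_ne a v with rfl | hav
      · exact Or.inl ⟨b, ((hGv b).mp hab).1⟩
      rcases eq_or_ne b v with heq | hbv
      · rw [heq] at hab
        exact Or.inl ⟨v, ((hGv a).mp hab.symm).1.symm⟩
      rcases eq_or_ne b v' with heq | hbv'
      · rw [heq] at hab
        exact Or.inl ⟨v, ((hGv' a).mp hab.symm).1.symm⟩
      · exact Or.inl ⟨b, (hGother a b hav hav' hbv hbv').mp hab⟩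
    have hfin' : G'.support.Finite :=
      Set.Finite.subset (hfin.union (Set.finite_singleton v')) hsup'
    -- the new cover
    set T' : Finset ℕ := insert v' (T.erase v) with hT'def
    set C' : Finset (Finset ℕ) := insert T' (C.erase T) with hC'def
    have hv'T' : v' ∈ T' := Finset.mem_insert_self _ _
    have hvT' : v ∉ T' := by
      simp only [hT'def, Finset.mem_insert]
      rintro (h | h)
      · exact hvv' h
      · exact (Finset.mem_erase.mp h).1 rfl
    have hT'new : T' ∉ C.erase T := fun h => hv'C T' (Finset.mem_of_mem_erase h) hv'T'
    have hmemT' : ∀ b, b ≠ v → b ≠ v' → (b ∈ T' ↔ b ∈ T) := by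
      intro b hbv hbv'
      simp only [hT'def, Finset.mem_insert, Finset.mem_erase]
      constructor
      · rintro (h | h)
        · exact absurd h hbv'
        · exact h.2
      · exact fun h => Or.inr ⟨hbv, h⟩
    have hT'C' : T' ∈ C' := Finset.mem_insert_self _ _
    have heraseC' : C.erase T ⊆ C' := Finset.subset_insert _ _
    -- covering for G'
    have hcov' : ∀ a b, G'.Adj a b → ∃ S₀ ∈ C', a ∈ S₀ ∧ b ∈ S₀ := by
      have main : ∀ a b, G'.Adj a b → a ≠ v → a ≠ v' → b ≠ v → b ≠ v' →
          ∃ S₀ ∈ C', a ∈ S₀ ∧ b ∈ S₀ := by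
        intro a b hab hav hav' hbv hbv'
        have h := (hGother a b hav hav' hbv hbv').mp hab
        obtain ⟨S₀, hS₀, ha, hb⟩ := hcov _ _ h
        rcases eq_or_ne S₀ T with heq | hne
        · subst heq
          exact ⟨T', hT'C', (hmemT' a hav hav').mpr ha, (hmemT' b hbv hbv').mpr hb⟩
        · exact ⟨S₀, heraseC' (Finset.mem_erase.mpr ⟨hne, hS₀⟩), ha, hb⟩
      have mainv : ∀ b, G'.Adj v b → ∃ S₀ ∈ C', v ∈ S₀ ∧ b ∈ S₀ := by
        intro b hab
        obtain ⟨h, S₀, hS₀, hne, hvS₀, hbS₀⟩ := (hGv b).mp hab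
        exact ⟨S₀, heraseC' (Finset.mem_erase.mpr ⟨hne, hS₀⟩), hvS₀, hbS₀⟩
      have mainv' : ∀ b, G'.Adj v' b → ∃ S₀ ∈ C', v' ∈ S₀ ∧ b ∈ S₀ := by
        intro b hab
        obtain ⟨h, hbT⟩ := (hGv' b).mp hab
        have hbv : b ≠ v := h.ne'
        have hbv' : b ≠ v' := fun hb => by subst hb; exact hnadj v h.symm
        exact ⟨T', hT'C', hv'T', (hmemT' b hbv hbv').mpr hbT⟩
      intro a b hab
      rcases eq_or_ne a v with heq | hav
      · rw [heq] at hab ⊢; exact mainv b hab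
      rcases eq_or_ne a v' with heq | hav'
      · rw [heq] at hab ⊢; exact mainv' b hab
      rcases eq_or_ne b v with heq | hbv
      · rw [heq] at hab ⊢
        obtain ⟨S₀, hS₀, h1, h2⟩ := mainv a hab.symm
        exact ⟨S₀, hS₀, h2, h1⟩
      rcases eq_or_ne b v' with heq | hbv'
      · rw [heq] at hab ⊢
        obtain ⟨S₀, hS₀, h1, h2⟩ := mainv' a hab.symm
        exact ⟨S₀, hS₀, h2, h1⟩
      · exact main a b hab hav hav' hbv hbv'
    -- each set of C' induces a 2-club in G'
    have hclub' : ∀ S₀ ∈ C', Inducing2Club G' (↑S₀ : Set ℕ) := by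
      intro S₀ hS₀
      rcases Finset.mem_insert.mp hS₀ with rfl | hS₀e
      · -- S₀ = T' : isomorphic copy of T via the swap
        refine inducing2Club_iso (Equiv.swap v v') ?_ ?_ (hclub T hTC)
        · intro a
          rcases eq_or_ne a v with heq | hav
          · rw [heq, Equiv.swap_apply_left]
            simp only [Finset.mem_coe]
            exact iff_of_true hvT hv'T'
          rcases eq_or_ne a v' with heq | hav'
          · rw [heq, Equiv.swap_apply_right]
            simp only [Finset.mem_coe]
            exact iff_of_false (fun h => hv'C T hTC h) hvT'
          · rw [Equiv.swap_apply_of_ne_of_ne hav hav']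
            simp only [Finset.mem_coe]
            exact hmemT' a hav hav' |>.symm
        · have key : ∀ a b, a ≠ v → a ≠ v' → b ≠ v → b ≠ v' →
              ((inducedOn G' ↑T').Adj (Equiv.swap v v' a) (Equiv.swap v v' b) ↔
                (inducedOn G ↑T).Adj a b) := by
            intro a b hav hav' hbv hbv'
            rw [Equiv.swap_apply_of_ne_of_ne hav hav', Equiv.swap_apply_of_ne_of_ne hbv hbv']
            constructor
            · rintro ⟨h, ha, hb⟩
              exact ⟨(hGother a b hav hav' hbv hbv').mp h,
                (hmemT' a hav hav').mp ha, (hmemT' b hbv hbv').mp hb⟩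
            · rintro ⟨h, ha, hb⟩
              exact ⟨(hGother a b hav hav' hbv hbv').mpr h,
                (hmemT' a hav hav').mpr ha, (hmemT' b hbv hbv').mpr hb⟩
          have keyv : ∀ b, b ≠ v → b ≠ v' →
              ((inducedOn G' ↑T').Adj (Equiv.swap v v' v) (Equiv.swap v v' b) ↔
                (inducedOn G ↑T).Adj v b) := by
            intro b hbv hbv'
            rw [Equiv.swap_apply_left, Equiv.swap_apply_of_ne_of_ne hbv hbv']
            constructor
            · rintro ⟨h, _, hb⟩
              obtain ⟨h1, h2⟩ := (hGv' b).mp h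
              exact ⟨h1, hvT, h2⟩
            · rintro ⟨h, _, hb⟩
              exact ⟨(hGv' b).mpr ⟨h, hb⟩, hv'T', (hmemT' b hbv hbv').mpr hb⟩
          have keyv' : ∀ b, ((inducedOn G' ↑T').Adj (Equiv.swap v v' v') (Equiv.swap v v' b) ↔
                (inducedOn G ↑T).Adj v' b) := by
            intro b
            rw [Equiv.swap_apply_right]
            constructor
            · rintro ⟨h, hmem, _⟩
              exact absurd hmem hvT'
            · rintro ⟨h, _, _⟩
              exact absurd h (hnadj b)
          intro a b
          rcases eq_or_ne a v with heq | hav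
          · rw [heq]
            rcases eq_or_ne b v with heq2 | hbv
            · rw [heq2]
              constructor
              · rintro ⟨h, _⟩; exact absurd rfl h.ne
              · rintro ⟨h, _⟩; exact absurd rfl h.ne
            rcases eq_or_ne b v' with heq2 | hbv'
            · rw [heq2]
              constructor
              · rintro ⟨h, _⟩
                rw [Equiv.swap_apply_left, Equiv.swap_apply_right] at h
                exact absurd h.symm hG'vv'
              · rintro ⟨h, _⟩
                exact absurd h (fun hh => hnadj v hh.symm)
            · exact keyv b hbv hbv'
          rcases eq_or_ne a v' with heq | hav'
          · rw [heq]
            rcases eq_or_ne b v with heq2 | hbv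
            · rw [heq2]
              constructor
              · rintro ⟨h, _⟩
                rw [Equiv.swap_apply_left, Equiv.swap_apply_right] at h
                exact absurd h hG'vv'
              · rintro ⟨h, _⟩
                exact absurd h (hnadj v)
            rcases eq_or_ne b v' with heq2 | hbv'
            · rw [heq2]
              constructor
              · rintro ⟨h, _⟩; exact absurd rfl h.ne
              · rintro ⟨h, _⟩; exact absurd rfl h.ne
            · exact keyv' b
          rcases eq_or_ne b v with heq | hbv
          · rw [heq]
            constructor
            · intro h
              exact ((keyv a hav hav').mp h.symm).symm
            · intro h
              exact ((keyv a hav hav').mpr h.symm).symm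
          rcases eq_or_ne b v' with heq | hbv'
          · rw [heq]
            constructor
            · intro h
              exact ((keyv' a).mp h.symm).symm
            · intro h
              exact ((keyv' a).mpr h.symm).symm
          · exact key a b hav hav' hbv hbv'
      · -- S₀ ∈ C.erase T : unchanged
        have hS₀C : S₀ ∈ C := Finset.mem_of_mem_erase hS₀e
        have hS₀T : S₀ ≠ T := (Finset.mem_erase.mp hS₀e).1
        have hv'S₀ : v' ∉ S₀ := hv'C S₀ hS₀C
        have heq : inducedOn G' ↑S₀ = inducedOn G ↑S₀ := by
          ext x y
          show G'.Adj x y ∧ _ ∧ _ ↔ G.Adj x y ∧ _ ∧ _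
          constructor
          · rintro ⟨h, hx, hy⟩
            refine ⟨?_, hx, hy⟩
            have hxv' : x ≠ v' := fun hh => hv'S₀ (hh ▸ hx)
            have hyv' : y ≠ v' := fun hh => hv'S₀ (hh ▸ hy)
            rcases eq_or_ne x v with heq | hxv
            · rw [heq] at h ⊢
              exact ((hGv y).mp h).1
            rcases eq_or_ne y v with heq | hyv
            · rw [heq] at h ⊢
              exact ((hGv x).mp h.symm).1.symm
            · exact (hGother x y hxv hxv' hyv hyv').mp h
          · rintro ⟨h, hx, hy⟩
            refine ⟨?_, hx, hy⟩
            have hxv' : x ≠ v' := fun hh => hv'S₀ (hh ▸ hx)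
            have hyv' : y ≠ v' := fun hh => hv'S₀ (hh ▸ hy)
            rcases eq_or_ne x v with heq | hxv
            · rw [heq] at h ⊢
              exact (hGv y).mpr ⟨h, S₀, hS₀C, hS₀T, heq ▸ hx, hy⟩
            rcases eq_or_ne y v with heq | hyv
            · rw [heq] at h ⊢
              exact ((hGv x).mpr ⟨h.symm, S₀, hS₀C, hS₀T, heq ▸ hy, hx⟩).symm
            · exact (hGother x y hxv hxv' hyv hyv').mpr h
        have hres := hclub S₀ hS₀C
        unfold Inducing2Club at hres ⊢
        rw [heq]
        exact hres
    -- multiplicity bookkeeping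
    have hfilter_erase : ∀ w : ℕ, (C.erase T).filter (fun S₀ => w ∈ S₀)
        = (C.filter (fun S₀ => w ∈ S₀)).erase T := fun w => Finset.filter_erase _ _ _
    have hf'_eq : ∀ w : ℕ, w ≠ v → w ≠ v' →
        (C'.filter (fun S₀ => w ∈ S₀)).card = (C.filter (fun S₀ => w ∈ S₀)).card := by
      intro w hwv hwv'
      rw [hC'def, Finset.filter_insert]
      rcases Finset.decidableMem w T with hwT | hwT
      · -- w ∉ T
        have hwT' : w ∉ T' := fun h => hwT ((hmemT' w hwv hwv').mp h)
        have hTnot : T ∉ C.filter (fun S₀ => w ∈ S₀) := fun h => hwT (Finset.mem_filter.mp h).2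
        rw [if_neg hwT', hfilter_erase, Finset.erase_eq_of_notMem hTnot]
      · -- w ∈ T
        have hwT' : w ∈ T' := (hmemT' w hwv hwv').mpr hwT
        have hTmem : T ∈ C.filter (fun S₀ => w ∈ S₀) := Finset.mem_filter.mpr ⟨hTC, hwT⟩
        have hT'notin : T' ∉ ((C.filter (fun S₀ => w ∈ S₀)).erase T) := fun h =>
          hv'C T' (Finset.mem_filter.mp (Finset.mem_of_mem_erase h)).1 hv'T'
        rw [if_pos hwT', hfilter_erase, Finset.card_insert_of_notMem hT'notin,
          Finset.card_erase_of_mem hTmem]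
        have : 1 ≤ (C.filter (fun S₀ => w ∈ S₀)).card := Finset.card_pos.mpr ⟨T, hTmem⟩
        omega
    have hf'_v : (C'.filter (fun S₀ => v ∈ S₀)).card
        = (C.filter (fun S₀ => v ∈ S₀)).card - 1 := by
      rw [hC'def, Finset.filter_insert, if_neg hvT', hfilter_erase,
        Finset.card_erase_of_mem (Finset.mem_filter.mpr ⟨hTC, hvT⟩)]
    have hf'_v' : (C'.filter (fun S₀ => v' ∈ S₀)).card = 1 := by
      have hempty : C.filter (fun S₀ => v' ∈ S₀) = ∅ :=
        Finset.filter_eq_empty_iff.mpr (fun S' hS' => hv'C S' hS')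
      rw [hC'def, Finset.filter_insert, if_pos hv'T', hfilter_erase, hempty]
      simp
    have hsup_eq : C'.sup id = insert v' (C.sup id) := by
      ext w
      simp only [Finset.mem_sup, Finset.mem_insert, id]
      constructor
      · rintro ⟨S₀, hS₀, hw⟩
        rcases Finset.mem_insert.mp hS₀ with rfl | hS₀e
        · rcases Finset.mem_insert.mp hw with h | h
          · exact Or.inl h
          · exact Or.inr ⟨T, hTC, Finset.mem_of_mem_erase h⟩
        · exact Or.inr ⟨S₀, Finset.mem_of_mem_erase hS₀e, hw⟩
      · rintro (rfl | ⟨S₀, hS₀, hw⟩)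
        · exact ⟨T', hT'C', hv'T'⟩
        · rcases eq_or_ne S₀ T with rfl | hne
          · rcases eq_or_ne w v with heq | hwv
            · exact ⟨S, heraseC' (Finset.mem_erase.mpr ⟨hST, hSC⟩), heq ▸ hvS⟩
            · have hwv' : w ≠ v' := fun h => hv'C S₀ hS₀ (h ▸ hw)
              exact ⟨T', hT'C', (hmemT' w hwv hwv').mpr hw⟩
          · exact ⟨S₀, heraseC' (Finset.mem_erase.mpr ⟨hne, hS₀⟩), hw⟩
    have hsum' : (∑ w ∈ C'.sup id, ((C'.filter (fun S₀ => w ∈ S₀)).card - 1)) = n := by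
      rw [hsup_eq, Finset.sum_insert (fun h => hv'sup h), hf'_v']
      have hvmem : v ∈ C.sup id := hvsup
      rw [← Finset.add_sum_erase _ _ hvmem] at hsum
      rw [← Finset.add_sum_erase _ _ hvmem]
      have hrest : ∑ w ∈ (C.sup id).erase v, ((C'.filter (fun S₀ => w ∈ S₀)).card - 1)
          = ∑ w ∈ (C.sup id).erase v, ((C.filter (fun S₀ => w ∈ S₀)).card - 1) := by
        refine Finset.sum_congr rfl (fun w hw => ?_)
        have hwv : w ≠ v := (Finset.mem_erase.mp hw).1
        have hwv' : w ≠ v' := fun h => hv'sup (h ▸ Finset.mem_of_mem_erase hw)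
        rw [hf'_eq w hwv hwv']
      rw [hrest, hf'_v]
      omega
    obtain ⟨l, H, hlen, hops, hH⟩ := ih G' C' hfin' hcov' hclub' hsum'
    exact ⟨Op.split v v' :: l, H, by simp [hlen], ⟨G', hsplit, hops⟩, hH⟩
theorem stmt18 (G : SimpleGraph ℕ) (hfin : G.support.Finite)
    (C : Finset (Finset ℕ)) (hC : Is2ClubCover G C) :
    (∃ (l : List Op) (H : SimpleGraph ℕ),
        l.length = coverCost G C ∧ OpsApply l G H ∧ Is2ClubGraph H) ∧
      twoCcedvs G ≤ coverCost G C := by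
  obtain ⟨hcover, hclub⟩ := hC
  have hedgefin : G.edgeSet.Finite := by
    refine Set.Finite.subset ((hfin.prod hfin).image (fun p => s(p.1, p.2))) ?_
    intro e he
    induction e with
    | _ u w =>
      rw [SimpleGraph.mem_edgeSet] at he
      exact ⟨(u, w), ⟨⟨w, he⟩, ⟨u, he.symm⟩⟩, rfl⟩
  set bad : Set (Sym2 ℕ) := {e : Sym2 ℕ | e ∈ G.edgeSet ∧ ¬ ∃ S ∈ C, ∀ x ∈ e, x ∈ S} with hbaddef
  have hbadfin : bad.Finite := hedgefin.subset (fun e he => he.1)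
  obtain ⟨l₁, hlen₁, hops₁⟩ := deletion_ops hbadfin.toFinset G (by
    rw [Set.Finite.coe_toFinset]
    exact fun e he => he.1)
  rw [Set.Finite.coe_toFinset] at hops₁
  set G₁ := G.deleteEdges bad with hG₁def
  -- properties of G₁
  have hle : G₁ ≤ G := by
    intro a b h
    rw [hG₁def, SimpleGraph.deleteEdges_adj] at h
    exact h.1
  have hfin₁ : G₁.support.Finite := hfin.subset (SimpleGraph.support_mono hle)
  have hcov₁ : ∀ a b, G₁.Adj a b → ∃ S ∈ C, a ∈ S ∧ b ∈ S := by
    intro a b hab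
    rw [hG₁def, SimpleGraph.deleteEdges_adj] at hab
    obtain ⟨h1, h2⟩ := hab
    by_contra hne
    push_neg at hne
    refine h2 ⟨(SimpleGraph.mem_edgeSet G).mpr h1, ?_⟩
    rintro ⟨S, hS, hall⟩
    exact hne S hS (hall a (Sym2.mem_mk_left a b)) (hall b (Sym2.mem_mk_right a b))
  have hclub₁ : ∀ S ∈ C, Inducing2Club G₁ (↑S : Set ℕ) := by
    intro S hS
    have heq : inducedOn G₁ ↑S = inducedOn G ↑S := by
      ext x y
      show G₁.Adj x y ∧ _ ∧ _ ↔ G.Adj x y ∧ _ ∧ _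
      constructor
      · rintro ⟨h, hx, hy⟩
        exact ⟨hle h, hx, hy⟩
      · rintro ⟨h, hx, hy⟩
        refine ⟨?_, hx, hy⟩
        rw [hG₁def, SimpleGraph.deleteEdges_adj]
        refine ⟨h, fun hb => hb.2 ⟨S, hS, ?_⟩⟩
        intro z hz
        rcases Sym2.mem_iff.mp hz with rfl | rfl
        · exact hx
        · exact hy
    have hres := hclub S hS
    unfold Inducing2Club at hres ⊢
    rw [heq]
    exact hres
  obtain ⟨l₂, H, hlen₂, hops₂, hH⟩ := splitPhase
    (∑ v ∈ C.sup id, ((C.filter (fun S => v ∈ S)).card - 1)) G₁ C hfin₁ hcov₁ hclub₁ rfl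
  have hcost : coverCost G C
      = (∑ v ∈ C.sup id, ((C.filter (fun S => v ∈ S)).card - 1)) + Set.ncard bad := rfl
  have hncard : Set.ncard bad = hbadfin.toFinset.card := by
    exact Set.ncard_eq_toFinset_card bad hbadfin
  have hmain : ∃ (l : List Op) (H : SimpleGraph ℕ),
      l.length = coverCost G C ∧ OpsApply l G H ∧ Is2ClubGraph H := by
    refine ⟨l₁ ++ l₂, H, ?_, opsApply_append hops₁ hops₂, hH⟩
    rw [List.length_append, hlen₁, hlen₂, hcost, hncard]
    omega
  exact ⟨hmain, Nat.sInf_le hmain⟩
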